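/- Let G be a group, B a subgroup of G, and C a subgroup of B with N_B(C) = C. Assume that for every g ∈ N_G(B) there exists b ∈ B with (C^g)^b = C. Then N_G(B) = B·N_{N_G(B)}(C), and there is an injective group homomorphism from N_G(B)/B into N_G(C)/C. In particular, if N_G(C) = C then N_G(B) = B. -/

import Mathlib

open Pointwise

/-- The conjugate `H^g = g⁻¹ * H * g` of a subgroup `H` by an element `g`. -/
def conjSub {G : Type*} [Group G] (H : Subgroup G) (g : G) : Subgroup G :=
  H.map (MulAut.conj g⁻¹).toMonoidHom

lemma mem_conjSub {G : Type*} [Group G] {H : Subgroup G} {g y : G} :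
    y ∈ conjSub H g ↔ g * y * g⁻¹ ∈ H := by
  simp only [conjSub, Subgroup.mem_map, MulEquiv.coe_toMonoidHom, MulAut.conj_apply]
  constructor
  · rintro ⟨c, hc, rfl⟩
    convert hc using 1
    group
  · intro h
    exact ⟨g * y * g⁻¹, h, by group⟩

lemma conjSub_conjSub {G : Type*} [Group G] (H : Subgroup G) (g b : G) :
    conjSub (conjSub H g) b = conjSub H (g * b) := by
  ext y
  simp only [mem_conjSub, mul_inv_rev]
  constructor <;> intro h <;>
    · convert h using 1
      group

lemma conjSub_eq_self_iff {G : Type*} [Group G] {H : Subgroup G} {g : G} :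
    conjSub H g = H ↔ g ∈ Subgroup.normalizer (H : Set G) := by
  rw [Subgroup.mem_normalizer_iff, SetLike.ext_iff]
  constructor
  · intro h n
    rw [← h n, mem_conjSub]
  · intro h y
    rw [mem_conjSub, ← h y]

/-- Let `G` be a group, `B` a subgroup of `G`, and `C` a subgroup of `B` with
`N_B(C) = C`.  Assume that every `N_G(B)`-conjugate of `C` is `B`-conjugate to `C`.
Then `N_G(B) = B·N_{N_G(B)}(C)`, and there is an injective group homomorphism from
`N_G(B)/B` into `N_G(C)/C`.  In particular, if `N_G(C) = C` then `N_G(B) = B`. -/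
theorem normalizer_quotient_embeds_weyl {G : Type*} [Group G] (B C : Subgroup G)
    (hCB : C ≤ B)
    (hself : (Subgroup.normalizer (C : Set G)) ⊓ B = C)
    (hconj : ∀ g ∈ (Subgroup.normalizer (B : Set G)), ∃ b ∈ B, conjSub (conjSub C g) b = C) :
    ((Subgroup.normalizer (B : Set G)) : Set G) =
        (B : Set G) * (((Subgroup.normalizer (C : Set G)) ⊓ (Subgroup.normalizer (B : Set G)) : Subgroup G) : Set G) ∧
      (∃ f : (↥(Subgroup.normalizer (B : Set G)) ⧸ B.subgroupOf (Subgroup.normalizer (B : Set G))) →*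
          (↥(Subgroup.normalizer (C : Set G)) ⧸ C.subgroupOf (Subgroup.normalizer (C : Set G))), Function.Injective f) ∧
      ((Subgroup.normalizer (C : Set G)) = C → (Subgroup.normalizer (B : Set G)) = B) := by
  set N := Subgroup.normalizer (B : Set G) with hN
  set H : Subgroup G := Subgroup.normalizer (C : Set G) ⊓ N with hH
  -- key decomposition
  have key : ∀ g ∈ N, ∃ b ∈ B, ∃ h ∈ H, g = b * h := by
    intro g hg
    obtain ⟨b, hb, hcb⟩ := hconj g hg
    rw [conjSub_conjSub, conjSub_eq_self_iff] at hcb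
    have hbN : b ∈ N := Subgroup.le_normalizer hb
    have hgbN : g * b ∈ N := mul_mem hg hbN
    have hb' : (g * b) * b⁻¹ * (g * b)⁻¹ ∈ B :=
      (Subgroup.mem_normalizer_iff.mp hgbN b⁻¹).mp (inv_mem hb)
    exact ⟨(g * b) * b⁻¹ * (g * b)⁻¹, hb', g * b, ⟨hcb, hgbN⟩, by group⟩
  have part1 : (N : Set G) = (B : Set G) * (H : Set G) := by
    apply Set.Subset.antisymm
    · intro g hg
      obtain ⟨b, hb, h, hh, rfl⟩ := key g hg
      exact Set.mul_mem_mul hb hh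
    · rintro x ⟨b, hb, h, hh, rfl⟩
      exact mul_mem (Subgroup.le_normalizer hb) hh.2
  refine ⟨part1, ?_, ?_⟩
  · -- the injective homomorphism
    have hHN : H ≤ N := inf_le_right
    have hHC : H ≤ Subgroup.normalizer (C : Set G) := inf_le_left
    set ψ : H →* N ⧸ B.subgroupOf N :=
      (QuotientGroup.mk' (B.subgroupOf N)).comp (Subgroup.inclusion hHN) with hψ
    set χ : H →* Subgroup.normalizer (C : Set G) ⧸ C.subgroupOf (Subgroup.normalizer (C : Set G)) :=
      (QuotientGroup.mk' (C.subgroupOf (Subgroup.normalizer (C : Set G)))).comp (Subgroup.inclusion hHC) with hχ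
    have ψmem : ∀ x : H, ψ x = 1 ↔ (x : G) ∈ B := by
      intro x
      rw [hψ, MonoidHom.comp_apply, QuotientGroup.mk'_apply, QuotientGroup.eq_one_iff,
        Subgroup.mem_subgroupOf, Subgroup.coe_inclusion]
    have χmem : ∀ x : H, χ x = 1 ↔ (x : G) ∈ C := by
      intro x
      rw [hχ, MonoidHom.comp_apply, QuotientGroup.mk'_apply, QuotientGroup.eq_one_iff,
        Subgroup.mem_subgroupOf, Subgroup.coe_inclusion]
    have ψsurj : Function.Surjective ψ := by
      rintro x
      obtain ⟨⟨n, hn⟩, rfl⟩ := QuotientGroup.mk_surjective x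
      obtain ⟨b, hb, h, hh, hdec⟩ := key n hn
      refine ⟨⟨h, hh⟩, ?_⟩
      rw [hψ, MonoidHom.comp_apply, QuotientGroup.mk'_apply, QuotientGroup.eq]
      have hhN : h ∈ N := hHN hh
      show (((Subgroup.inclusion hHN ⟨h, hh⟩ : N))⁻¹ * (⟨n, hn⟩ : N) : N).1 ∈ B
      have hcoe : (((Subgroup.inclusion hHN ⟨h, hh⟩ : N))⁻¹ * (⟨n, hn⟩ : N) : N).1
          = h⁻¹ * b * h := by
        show h⁻¹ * n = h⁻¹ * b * h
        rw [hdec]; group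
      rw [hcoe]
      have := (Subgroup.mem_normalizer_iff.mp (inv_mem hhN) b).mp hb
      simpa [mul_assoc] using this
    have hker : ∀ x ∈ ψ.ker, χ x = 1 := by
      intro x hx
      rw [MonoidHom.mem_ker, ψmem] at hx
      rw [χmem, ← hself]
      exact ⟨(hHC x.2 : (x : G) ∈ Subgroup.normalizer (C : Set G)), hx⟩
    set e := QuotientGroup.quotientKerEquivOfSurjective ψ ψsurj with he
    refine ⟨(QuotientGroup.lift ψ.ker χ hker).comp e.symm.toMonoidHom, ?_⟩
    have hlift : Function.Injective (QuotientGroup.lift ψ.ker χ hker) := by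
      rw [← MonoidHom.ker_eq_bot_iff]
      rw [eq_bot_iff]
      intro a ha
      rw [MonoidHom.mem_ker] at ha
      obtain ⟨x, rfl⟩ := QuotientGroup.mk_surjective a
      change χ x = 1 at ha
      have hxC : (x : G) ∈ C := (χmem x).mp ha
      have : x ∈ ψ.ker := by
        rw [MonoidHom.mem_ker, ψmem]
        exact hCB hxC
      simpa [Subgroup.mem_bot, QuotientGroup.eq_one_iff] using
        (QuotientGroup.eq_one_iff x).mpr this
    exact hlift.comp e.symm.injective
  · -- if N_G(C) = C then N_G(B) = B
    intro hCC
    refine le_antisymm ?_ Subgroup.le_normalizer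
    intro g hg
    obtain ⟨b, hb, h, hh, rfl⟩ := key g hg
    have : h ∈ C := hCC ▸ hh.1
    exact mul_mem hb (hCB this)
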